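/- For a continuous potential φ: ℕ^G → ℝ on a countable amenable group G and any finite alphabet A ⊆ ℕ, the pressure p(A,φ) = lim_{F→G} (1/|F|) log Z_F(A,φ) exists (as a limit over sets becoming more and more invariant) and equals inf over nonempty finite E ⊆ G of (1/|E|) log Z_E(A,φ) (the infimum rule). -/

import Mathlib

open scoped Pointwise symmDiff
open Filter MeasureTheory

variable {G : Type*} [Group G] [DecidableEq G]

/-- The (right) shift action of `G` on `ℕ^G`: `(g · x)(h) = x(hg)`. -/
def shift (g : G) (x : G → ℕ) : G → ℕ := fun h => x (h * g)

/-- `φ_F(x) = Σ_{g ∈ F} φ(g · x)`. -/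
noncomputable def phiSum (φ : (G → ℕ) → ℝ) (F : Finset G) (x : G → ℕ) : ℝ :=
  ∑ g ∈ F, φ (shift g x)

/-- The variation `δ_E(φ) = sup {|φ(x) - φ(y)| : x_E = y_E}`. -/
noncomputable def pvar (φ : (G → ℕ) → ℝ) (E : Set G) : ℝ :=
  sSup {d | ∃ x y : G → ℕ, (∀ g ∈ E, x g = y g) ∧ d = |φ x - φ y|}

/-- An exhausting sequence for `G`. -/
structure IsExhaustion (E : ℕ → Finset G) : Prop where
  empty : E 0 = ∅
  one_mem : (1 : G) ∈ E 1
  mono : ∀ m, E m ⊆ E (m + 1)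
  exhaust : ∀ g : G, ∃ m, g ∈ E m

/-- The `m`-th term (reindexed from `m ≥ 1`) of the `F`-sum of variations
`V_F(φ) = Σ_{m ≥ 1} |E_{m+1}⁻¹ F \ E_m⁻¹ F| · δ_{E_m}(φ)`. -/
noncomputable def vterm (φ : (G → ℕ) → ℝ) (E : ℕ → Finset G) (F : Finset G) (m : ℕ) : ℝ :=
  ((((E (m + 2))⁻¹ * F) \ ((E (m + 1))⁻¹ * F)).card : ℝ) *
    pvar φ ((E (m + 1) : Finset G) : Set G)

/-- The `F`-sum of variations `V_F(φ)` (according to the exhausting sequence `E`). -/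
noncomputable def VF (φ : (G → ℕ) → ℝ) (E : ℕ → Finset G) (F : Finset G) : ℝ :=
  ∑' m : ℕ, vterm φ E F m

/-- Finiteness of the `F`-sum of variations. -/
def SummableVarF (φ : (G → ℕ) → ℝ) (E : ℕ → Finset G) (F : Finset G) : Prop :=
  Summable (vterm φ E F)

/-- `φ` has summable variation according to `E`: `V(φ) = V_{{1}}(φ) < ∞`. -/
def SummableVariation (φ : (G → ℕ) → ℝ) (E : ℕ → Finset G) : Prop :=
  SummableVarF φ E {1}

/-- `F` is `(K, δ)`-invariant: `|KF △ F| < δ |F|`. -/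
def FInv (K : Finset G) (δ : ℝ) (F : Finset G) : Prop :=
  (((K * F) ∆ F).card : ℝ) < δ * F.card

/-- `G` is amenable: `(K,δ)`-invariant nonempty finite sets exist for all `K, δ`. -/
def Amen : Prop :=
  ∀ (K : Finset G) (δ : ℝ), 0 < δ → ∃ F : Finset G, F.Nonempty ∧ FInv K δ F

/-- `sup φ_F([w])` for a pattern `w` on `F` (countable alphabet `ℕ`). -/
noncomputable def cylSup (φ : (G → ℕ) → ℝ) (F : Finset G) (w : ↥F → ℕ) : ℝ :=
  sSup {r | ∃ x : G → ℕ, (∀ g : ↥F, x g = w g) ∧ r = phiSum φ F x}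

/-- The partition function `Z_F(φ) = Σ_{w ∈ ℕ^F} exp (sup φ_F([w]))`. -/
noncomputable def ZF (φ : (G → ℕ) → ℝ) (F : Finset G) : ℝ :=
  ∑' w : ↥F → ℕ, Real.exp (cylSup φ F w)

/-- `sup φ_F([w] ∩ A^G)` for a pattern `w` on `F` restricted to a finite alphabet `A`. -/
noncomputable def cylSupA (φ : (G → ℕ) → ℝ) (A : Finset ℕ) (F : Finset G) (w : ↥F → ℕ) : ℝ :=
  sSup {r | ∃ x : G → ℕ, (∀ g : G, x g ∈ A) ∧ (∀ g : ↥F, x g = w g) ∧ r = phiSum φ F x}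

/-- The finite-alphabet partition function `Z_F(A, φ)`. -/
noncomputable def ZFA (φ : (G → ℕ) → ℝ) (A : Finset ℕ) (F : Finset G) : ℝ :=
  ∑ w : ↥F → ↥A, Real.exp (cylSupA φ A F (fun g => (w g : ℕ)))

/-- `φ` is exp-summable: `Z_{1_G}(φ) = Σ_a exp (sup φ([a])) < ∞`. -/
def ExpSummable (φ : (G → ℕ) → ℝ) : Prop :=
  Summable (fun a : ℕ => Real.exp (sSup {r | ∃ x : G → ℕ, x 1 = a ∧ r = φ x}))

/-- Coordinate-wise application of a family of permutations of `ℕ`. -/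
def permApp (σ : G → Equiv.Perm ℕ) (x : G → ℕ) : G → ℕ := fun g => σ g (x g)

/-- The family `σ` is supported on `K`. -/
def SupportedOn (σ : G → Equiv.Perm ℕ) (K : Finset G) : Prop := ∀ g ∉ K, σ g = 1

/-- `φ_F^τ = φ_F ∘ τ⁻¹ - φ_F` for the coordinate-wise permutation `τ` given by `σ`. -/
noncomputable def phiTau (φ : (G → ℕ) → ℝ) (F : Finset G) (σ : G → Equiv.Perm ℕ)
    (x : G → ℕ) : ℝ :=
  phiSum φ F (permApp (fun g => (σ g)⁻¹) x) - phiSum φ F x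

/-- The family of the translated permutation `g · τ = τ_{K g⁻¹}`. -/
def transPerm (σ : G → Equiv.Perm ℕ) (g : G) : G → Equiv.Perm ℕ := fun h => σ (h * g)

/-- Replace a configuration by the pattern `w` on `K`. -/
def patch (K : Finset G) (w x : G → ℕ) : G → ℕ := fun g => if g ∈ K then w g else x g

/-- The involution `τ_{w,v}` exchanging the patterns `w` and `v` on `K`. -/
def swapKV (K : Finset G) (w v x : G → ℕ) : G → ℕ :=
  if ∀ g ∈ K, x g = w g then patch K v x
  else if ∀ g ∈ K, x g = v g then patch K w x
  else x

/-- Extension of a `K`-pattern to a full configuration (by `0` off `K`). -/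
def extK (K : Finset G) (v : ↥K → ℕ) : G → ℕ :=
  fun g => if h : g ∈ K then v ⟨g, h⟩ else 0

/-- The cylinder of configurations agreeing with `x` on `F`. -/
def cylEvent (F : Finset G) (x : G → ℕ) : Set (G → ℕ) := {y | ∀ g ∈ F, y g = x g}

/-- The cylinder of configurations realizing the `F`-pattern `w`. -/
def cylPat (F : Finset G) (w : ↥F → ℕ) : Set (G → ℕ) := {x | ∀ g : ↥F, x g = w g}

/-- `μ` is a Bowen-Gibbs measure for `φ` with constant `p`. -/
def IsBowenGibbs (φ : (G → ℕ) → ℝ) (μ : Measure (G → ℕ)) (p : ℝ) : Prop :=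
  ∀ ε : ℝ, 0 < ε → ∃ (K : Finset G) (δ : ℝ), 0 < δ ∧
    ∀ F : Finset G, F.Nonempty → FInv K δ F → ∀ x : G → ℕ,
      Real.exp (-(ε * F.card)) ≤
          (μ (cylEvent F x)).toReal / Real.exp (phiSum φ F x - p * F.card) ∧
      (μ (cylEvent F x)).toReal / Real.exp (phiSum φ F x - p * F.card) ≤
          Real.exp (ε * F.card)

/-- The Shannon entropy `H_F(μ)` of the `F`-refinement of the canonical partition. -/
noncomputable def HFent (μ : Measure (G → ℕ)) (F : Finset G) : ℝ :=
  ∑' w : ↥F → ℕ, Real.negMulLog ((μ (cylPat F w)).toReal)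

section PressureAux

open Finset MeasureTheory Function
open scoped ENNReal

variable {G : Type*} [Group G] [DecidableEq G]

/-- Every ℝ≥0∞-valued function that depends on finitely many coordinates is measurable. -/
lemma measurable_of_agree (S : Finset G) (f : (G → ℕ) → ℝ≥0∞)
    (h : ∀ x y : G → ℕ, (∀ g ∈ S, x g = y g) → f x = f y) : Measurable f := by
  haveI : MeasurableSingletonClass (↥S → ℕ) := by
    constructor
    intro y
    have hy : ({y} : Set (↥S → ℕ)) = ⋂ i, (fun x : ↥S → ℕ => x i) ⁻¹' {y i} := by
      ext z
      simp [funext_iff]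
    rw [hy]
    exact MeasurableSet.iInter fun i => (measurable_pi_apply i) (measurableSet_singleton _)
  have hf : f = (fun z : ↥S → ℕ => f (fun g => if hg : g ∈ S then z ⟨g, hg⟩ else 0)) ∘
      (fun x (i : ↥S) => x ↑i) := by
    funext x
    exact h x _ (fun g hg => by simp [hg])
  rw [hf]
  exact (measurable_of_countable _).comp
    (measurable_pi_lambda _ fun i => measurable_pi_apply _)

/-- The counting measure on the alphabet `A`. -/
noncomputable def muA (A : Finset ℕ) : Measure ℕ := ∑ a ∈ A, Measure.dirac a

lemma lintegral_muA (A : Finset ℕ) (f : ℕ → ℝ≥0∞) :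
    ∫⁻ n, f n ∂(muA A) = ∑ a ∈ A, f a := by
  rw [muA, lintegral_finset_sum_measure]
  exact Finset.sum_congr rfl fun a _ => lintegral_dirac a f

instance (A : Finset ℕ) : IsFiniteMeasure (muA A) := by
  constructor
  rw [muA, Measure.finset_sum_apply]
  simp

/-- Override a configuration by a pattern on `F` taking values in `A`. -/
def ovr (A : Finset ℕ) (x : G → ℕ) (F : Finset G) (w : ↥F → ↥A) : G → ℕ :=
  fun g => if h : g ∈ F then (w ⟨g, h⟩ : ℕ) else x g

/-- Glueing a value at `g` with a pattern on `F`. -/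
def glueEquiv (A : Finset ℕ) {g : G} {F : Finset G} (hg : g ∉ F) :
    (↥A × (↥F → ↥A)) ≃ (↥(insert g F) → ↥A) where
  toFun p := fun i => if h : (i : G) ∈ F then p.2 ⟨i, h⟩ else p.1
  invFun v := (v ⟨g, Finset.mem_insert_self g F⟩,
    fun i => v ⟨i, Finset.mem_insert_of_mem i.2⟩)
  left_inv := by
    rintro ⟨a, w⟩
    refine Prod.ext ?_ ?_
    · show (if h : (g : G) ∈ F then w ⟨g, h⟩ else a) = a
      simp [hg]
    · funext i
      show (if h : (i : G) ∈ F then w ⟨i, h⟩ else a) = w i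
      rcases i with ⟨i, hi⟩
      simp [hi]
  right_inv := by
    intro v
    funext i
    rcases i with ⟨i, hi⟩
    by_cases h : i ∈ F
    · simp [h]
    · have hig : i = g := by
        rcases Finset.mem_insert.mp hi with h' | h'
        · exact h'
        · exact absurd h' h
      subst hig
      simp [h]

lemma lmarginal_eq_sum (A : Finset ℕ) (F : Finset G) (f : (G → ℕ) → ℝ≥0∞)
    (hf : Measurable f) (x : G → ℕ) :
    (∫⋯∫⁻_F, f ∂(fun _ : G => muA A)) x = ∑ w : ↥F → ↥A, f (ovr A x F w) := by
  classical
  induction F using Finset.induction generalizing x with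
  | empty =>
    rw [lmarginal_empty]
    haveI : IsEmpty (↥(∅ : Finset G)) := by
      constructor; rintro ⟨i, hi⟩; simp at hi
    rw [Fintype.sum_subsingleton _ (fun i : ↥(∅ : Finset G) => (isEmptyElim i : ↥A))]
    exact (congrArg f (funext (fun g => by simp [ovr]))).symm
  | @insert g F hg ih =>
    have hmatch : ∀ p : ↥A × (↥F → ↥A),
        f (ovr A (Function.update x g ↑p.1) F p.2) =
          f (ovr A x (insert g F) (glueEquiv A hg p)) := by
      rintro ⟨a, w⟩
      congr 1
      funext g'
      by_cases h' : g' ∈ F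
      · simp [ovr, glueEquiv, h', Finset.mem_insert_of_mem h']
      · by_cases h'' : g' = g
        · subst h''
          simp [ovr, glueEquiv, h', hg]
        · simp [ovr, glueEquiv, h', h'',
            (by simp [h', h''] : g' ∉ insert g F)]
    have step1 : (∫⋯∫⁻_insert g F, f ∂(fun _ : G => muA A)) x
        = ∑ a : ↥A, ∑ w : ↥F → ↥A, f (ovr A (Function.update x g ↑a) F w) := by
      rw [lmarginal_insert _ hf hg]
      show (∫⁻ t, (∫⋯∫⁻_F, f ∂(fun _ : G => muA A)) (Function.update x g t) ∂(muA A)) = _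
      rw [lintegral_muA, ← Finset.sum_coe_sort A]
      exact Finset.sum_congr rfl fun a _ => ih _
    rw [step1]
    calc ∑ a : ↥A, ∑ w : ↥F → ↥A, f (ovr A (Function.update x g ↑a) F w)
        = ∑ p : ↥A × (↥F → ↥A), f (ovr A (Function.update x g ↑p.1) F p.2) :=
          (Fintype.sum_prod_type
            (f := fun p : ↥A × (↥F → ↥A) =>
              f (ovr A (Function.update x g ↑p.1) F p.2))).symm
      _ = ∑ v : ↥(insert g F) → ↥A, f (ovr A x (insert g F) v) :=
          Fintype.sum_equiv (glueEquiv A hg) _ _ hmatch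

/-- Shearer/Finner inequality for exact `k`-covers, in marginal form. -/
lemma finner_marginal {κ : Type*} (A : Finset ℕ) (I : Finset κ) (k : ℕ) (hk : 0 < k)
    (T : Finset G) :
    ∀ (S : κ → Finset G) (f : κ → (G → ℕ) → ℝ≥0∞),
      (∀ c ∈ I, S c ⊆ T) →
      (∀ i ∈ T, (I.filter fun c => i ∈ S c).card = k) →
      (∀ c ∈ I, Measurable (f c)) →
      (∀ c ∈ I, ∀ i, i ∉ S c → ∀ x a, f c (Function.update x i a) = f c x) →
      ∀ x : G → ℕ,
        (∫⋯∫⁻_T, (fun y => ∏ c ∈ I, f c y ^ (k : ℝ)⁻¹) ∂(fun _ : G => muA A)) x ≤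
          ∏ c ∈ I, ((∫⋯∫⁻_(S c), f c ∂(fun _ : G => muA A)) x) ^ (k : ℝ)⁻¹ := by
  classical
  induction T using Finset.induction with
  | empty =>
    intro S f hS hcov hm hdep x
    rw [lmarginal_empty]
    refine le_of_eq (Finset.prod_congr rfl fun c hc => ?_)
    rw [Finset.subset_empty.mp (hS c hc), lmarginal_empty]
  | @insert i T' hiT ih =>
    intro S f hS hcov hm hdep x
    have hkR : ((k : ℝ)⁻¹ : ℝ) ≥ 0 := by positivity
    have hmprod : Measurable (fun y => ∏ c ∈ I, f c y ^ (k : ℝ)⁻¹) :=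
      Finset.measurable_prod I fun c hc => (hm c hc).pow_const _
    set g : κ → (G → ℕ) → ℝ≥0∞ :=
      fun c => if i ∈ S c then (∫⋯∫⁻_{i}, f c ∂(fun _ : G => muA A)) else f c with hgdef
    set S' : κ → Finset G := fun c => (S c).erase i with hS'def
    have hJcard : (I.filter fun c => i ∈ S c).card = k := hcov i (Finset.mem_insert_self i T')
    -- pointwise Hölder bound
    have hb : ∀ x' : G → ℕ,
        (∫⁻ t, ∏ c ∈ I, f c (Function.update x' i t) ^ (k : ℝ)⁻¹ ∂(muA A)) ≤
          ∏ c ∈ I, g c x' ^ (k : ℝ)⁻¹ := by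
      intro x'
      have hsplit : ∀ t, ∏ c ∈ I, f c (Function.update x' i t) ^ (k : ℝ)⁻¹ =
          (∏ c ∈ I.filter (fun c => i ∈ S c), f c (Function.update x' i t) ^ (k : ℝ)⁻¹) *
          (∏ c ∈ I.filter (fun c => ¬ i ∈ S c), f c x' ^ (k : ℝ)⁻¹) := by
        intro t
        rw [← Finset.prod_filter_mul_prod_filter_not I (fun c => i ∈ S c)]
        congr 1
        refine Finset.prod_congr rfl fun c hc => ?_
        rw [hdep c (Finset.mem_filter.mp hc).1 i (Finset.mem_filter.mp hc).2 x' t]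
      calc (∫⁻ t, ∏ c ∈ I, f c (Function.update x' i t) ^ (k : ℝ)⁻¹ ∂(muA A))
          = ∫⁻ t, (∏ c ∈ I.filter (fun c => i ∈ S c),
                f c (Function.update x' i t) ^ (k : ℝ)⁻¹) *
              (∏ c ∈ I.filter (fun c => ¬ i ∈ S c), f c x' ^ (k : ℝ)⁻¹) ∂(muA A) :=
            lintegral_congr fun t => hsplit t
        _ = (∫⁻ t, ∏ c ∈ I.filter (fun c => i ∈ S c),
                f c (Function.update x' i t) ^ (k : ℝ)⁻¹ ∂(muA A)) *
              (∏ c ∈ I.filter (fun c => ¬ i ∈ S c), f c x' ^ (k : ℝ)⁻¹) := by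
            refine lintegral_mul_const _ ?_
            exact Finset.measurable_prod _ fun c hc =>
              (((hm c (Finset.mem_filter.mp hc).1).comp (measurable_update x')).pow_const _)
        _ ≤ (∏ c ∈ I.filter (fun c => i ∈ S c),
                (∫⁻ t, f c (Function.update x' i t) ∂(muA A)) ^ (k : ℝ)⁻¹) *
              (∏ c ∈ I.filter (fun c => ¬ i ∈ S c), f c x' ^ (k : ℝ)⁻¹) := by
            gcongr
            refine ENNReal.lintegral_prod_norm_pow_le _
              (fun c hc => ((hm c (Finset.mem_filter.mp hc).1).comp
                (measurable_update x')).aemeasurable) ?_ (fun c _ => hkR)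
            rw [Finset.sum_const, hJcard, nsmul_eq_mul]
            exact mul_inv_cancel₀ (by exact_mod_cast hk.ne')
        _ = ∏ c ∈ I, g c x' ^ (k : ℝ)⁻¹ := by
            rw [← Finset.prod_filter_mul_prod_filter_not I (fun c => i ∈ S c)
              (fun c => g c x' ^ (k : ℝ)⁻¹)]
            congr 1
            · refine Finset.prod_congr rfl fun c hc => ?_
              have hcS : i ∈ S c := (Finset.mem_filter.mp hc).2
              simp only [hgdef]
              simp only [if_pos hcS, lmarginal_singleton]
            · refine Finset.prod_congr rfl fun c hc => ?_
              have hcS : ¬ i ∈ S c := (Finset.mem_filter.mp hc).2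
              simp only [hgdef]
              simp only [if_neg hcS]
    -- hypotheses for the inductive step
    have hS' : ∀ c ∈ I, S' c ⊆ T' := by
      intro c hc j hj
      have hj1 := Finset.mem_of_mem_erase hj
      rcases Finset.mem_insert.mp (hS c hc hj1) with h' | h'
      · exact absurd h' (Finset.mem_erase.mp hj).1
      · exact h'
    have hcov' : ∀ j ∈ T', (I.filter fun c => j ∈ S' c).card = k := by
      intro j hj
      have hji : j ≠ i := fun h => hiT (h ▸ hj)
      have : (I.filter fun c => j ∈ S' c) = (I.filter fun c => j ∈ S c) := by
        refine Finset.filter_congr fun c _ => ?_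
        simp [hS'def, Finset.mem_erase, hji]
      rw [this]
      exact hcov j (Finset.mem_insert_of_mem hj)
    have hm' : ∀ c ∈ I, Measurable (g c) := by
      intro c hc
      simp only [hgdef]
      by_cases h : i ∈ S c
      · simp only [if_pos h]
        exact (hm c hc).lmarginal _
      · simp only [if_neg h]
        exact hm c hc
    have hdep' : ∀ c ∈ I, ∀ j, j ∉ S' c → ∀ x a, g c (Function.update x j a) = g c x := by
      intro c hc j hj x' a
      by_cases h : i ∈ S c
      · simp only [hgdef]
        simp only [if_pos h]
        by_cases hji : j = i
        · subst hji
          exact lmarginal_update_of_mem _ (Finset.mem_singleton_self j) _ _ _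
        · have hjS : j ∉ S c := fun hmem => hj (Finset.mem_erase.mpr ⟨hji, hmem⟩)
          simp only [lmarginal_singleton]
          refine lintegral_congr fun t => ?_
          rw [Function.update_comm hji a t x']
          exact hdep c hc j hjS _ a
      · simp only [hgdef]
        simp only [if_neg h]
        have hjS : j ∉ S c := by
          simp only [hS'def, Finset.erase_eq_of_notMem h] at hj
          exact hj
        exact hdep c hc j hjS x' a
    -- chain
    calc (∫⋯∫⁻_insert i T', (fun y => ∏ c ∈ I, f c y ^ (k : ℝ)⁻¹)
            ∂(fun _ : G => muA A)) x
        = (∫⋯∫⁻_T', (fun x' => ∫⁻ t,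
              ∏ c ∈ I, f c (Function.update x' i t) ^ (k : ℝ)⁻¹ ∂(muA A))
            ∂(fun _ : G => muA A)) x := by
          rw [lmarginal_insert' _ hmprod hiT]
      _ ≤ (∫⋯∫⁻_T', (fun x' => ∏ c ∈ I, g c x' ^ (k : ℝ)⁻¹)
            ∂(fun _ : G => muA A)) x := lmarginal_mono (fun x' => hb x') x
      _ ≤ ∏ c ∈ I, ((∫⋯∫⁻_(S' c), g c ∂(fun _ : G => muA A)) x) ^ (k : ℝ)⁻¹ :=
          ih S' g hS' hcov' hm' hdep' x
      _ = ∏ c ∈ I, ((∫⋯∫⁻_(S c), f c ∂(fun _ : G => muA A)) x) ^ (k : ℝ)⁻¹ := by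
          refine Finset.prod_congr rfl fun c hc => ?_
          by_cases h : i ∈ S c
          · have hSc : S c = S' c ∪ {i} := by
              simp only [hS'def]
              rw [Finset.union_comm, ← Finset.insert_eq, Finset.insert_erase h]
            have hdisj : Disjoint (S' c) ({i} : Finset G) := by
              rw [Finset.disjoint_singleton_right]
              simp only [hS'def]
              exact Finset.notMem_erase i (S c)
            rw [hSc, lmarginal_union _ (f c) (hm c hc) hdisj]
            simp only [hgdef]
            simp only [if_pos h]
          · have : S' c = S c := by rw [hS'def]; exact Finset.erase_eq_of_notMem h
            rw [this]
            simp only [hgdef, if_neg h]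

end PressureAux

section PressureAux2

open Finset MeasureTheory Function
open scoped ENNReal Pointwise

variable {G : Type*} [Group G] [DecidableEq G]
variable {φ : (G → ℕ) → ℝ} {A : Finset ℕ}

lemma ofReal_prod_of_nonneg {ι : Type*} (s : Finset ι) (f : ι → ℝ)
    (h : ∀ i ∈ s, 0 ≤ f i) :
    ENNReal.ofReal (∏ i ∈ s, f i) = ∏ i ∈ s, ENNReal.ofReal (f i) := by
  classical
  induction s using Finset.cons_induction with
  | empty => simp
  | cons a s ha ih =>
    rw [Finset.prod_cons, Finset.prod_cons,
      ENNReal.ofReal_mul (h a (Finset.mem_cons_self a s)),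
      ih (fun i hi => h i (Finset.mem_cons_of_mem hi))]

/-- A uniform bound for a continuous potential on the compact set `A^G`. -/
lemma exists_potential_bound (hφ : Continuous φ) (A : Finset ℕ) :
    ∃ M : ℝ, 0 ≤ M ∧ ∀ x : G → ℕ, (∀ g, x g ∈ A) → |φ x| ≤ M := by
  have hcomp : IsCompact (Set.univ.pi fun _ : G => (A : Set ℕ)) :=
    isCompact_univ_pi fun _ => A.finite_toSet.isCompact
  obtain ⟨C, hC⟩ := hcomp.exists_bound_of_continuousOn hφ.continuousOn
  refine ⟨max C 0, le_max_right _ _, fun x hx => ?_⟩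
  have hxmem : x ∈ Set.univ.pi fun _ : G => (A : Set ℕ) := by
    intro g _
    exact hx g
  calc |φ x| = ‖φ x‖ := (Real.norm_eq_abs _).symm
    _ ≤ C := hC x hxmem
    _ ≤ max C 0 := le_max_left _ _

lemma shift_mem_A {x : G → ℕ} (hx : ∀ g, x g ∈ A) (g : G) :
    ∀ h, shift g x h ∈ A := fun h => hx (h * g)

lemma abs_phiSum_le {M : ℝ} (hM : ∀ x : G → ℕ, (∀ g, x g ∈ A) → |φ x| ≤ M)
    (F : Finset G) {x : G → ℕ} (hx : ∀ g, x g ∈ A) :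
    |phiSum φ F x| ≤ M * F.card := by
  calc |phiSum φ F x| ≤ ∑ g ∈ F, |φ (shift g x)| := Finset.abs_sum_le_sum_abs _ _
    _ ≤ ∑ _g ∈ F, M := Finset.sum_le_sum fun g _ => hM _ (shift_mem_A hx g)
    _ = M * F.card := by rw [Finset.sum_const, nsmul_eq_mul, mul_comm]

/-- Upper bound for `cylSupA` (valid for every pattern). -/
lemma cylSupA_le {M : ℝ} (hM0 : 0 ≤ M)
    (hM : ∀ x : G → ℕ, (∀ g, x g ∈ A) → |φ x| ≤ M) (F : Finset G) (w : ↥F → ℕ) :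
    cylSupA φ A F w ≤ M * F.card := by
  refine Real.sSup_le ?_ (by positivity)
  rintro r ⟨x, hxA, hxw, rfl⟩
  exact (abs_le.mp (abs_phiSum_le hM F hxA)).2

lemma bddAbove_cylSupA_set {M : ℝ}
    (hM : ∀ x : G → ℕ, (∀ g, x g ∈ A) → |φ x| ≤ M) (F : Finset G) (w : ↥F → ℕ) :
    BddAbove {r | ∃ x : G → ℕ, (∀ g : G, x g ∈ A) ∧ (∀ g : ↥F, x g = w g) ∧
      r = phiSum φ F x} := by
  refine ⟨M * F.card, ?_⟩
  rintro r ⟨x, hxA, hxw, rfl⟩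
  exact (abs_le.mp (abs_phiSum_le hM F hxA)).2

/-- Lower bound for `cylSupA` for patterns with values in `A`. -/
lemma le_cylSupA {M : ℝ} {a₀ : ℕ} (ha₀ : a₀ ∈ A)
    (hM : ∀ x : G → ℕ, (∀ g, x g ∈ A) → |φ x| ≤ M) (F : Finset G) (w : ↥F → ℕ)
    (hw : ∀ i, w i ∈ A) :
    -(M * F.card) ≤ cylSupA φ A F w := by
  set x : G → ℕ := fun g => if h : g ∈ F then w ⟨g, h⟩ else a₀ with hxdef
  have hxA : ∀ g, x g ∈ A := by
    intro g
    rw [hxdef]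
    by_cases h : g ∈ F
    · simpa [h] using hw ⟨g, h⟩
    · simpa [h] using ha₀
  have hxw : ∀ i : ↥F, x ↑i = w i := by
    intro i
    rw [hxdef]
    simp [i.2]
  have hmem : phiSum φ F x ∈ {r | ∃ y : G → ℕ, (∀ g : G, y g ∈ A) ∧
      (∀ g : ↥F, y g = w g) ∧ r = phiSum φ F y} := ⟨x, hxA, hxw, rfl⟩
  calc -(M * F.card) ≤ phiSum φ F x := neg_le_of_abs_le (abs_phiSum_le hM F hxA)
    _ ≤ cylSupA φ A F w := le_csSup (bddAbove_cylSupA_set hM F w) hmem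

lemma ZFA_pos (hA : A.Nonempty) (F : Finset G) : 0 < ZFA φ A F := by
  obtain ⟨a₀, ha₀⟩ := hA
  haveI : Nonempty (↥F → ↥A) := ⟨fun _ => ⟨a₀, ha₀⟩⟩
  exact Finset.sum_pos (fun w _ => Real.exp_pos _) Finset.univ_nonempty

lemma ZFA_le {M : ℝ} (hM0 : 0 ≤ M)
    (hM : ∀ x : G → ℕ, (∀ g, x g ∈ A) → |φ x| ≤ M) (F : Finset G) :
    ZFA φ A F ≤ (A.card : ℝ) ^ F.card * Real.exp (M * F.card) := by
  calc ZFA φ A F ≤ ∑ _w : ↥F → ↥A, Real.exp (M * F.card) :=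
        Finset.sum_le_sum fun w _ =>
          Real.exp_le_exp.mpr (cylSupA_le hM0 hM F _)
    _ = (A.card : ℝ) ^ F.card * Real.exp (M * F.card) := by
        rw [Finset.sum_const, Finset.card_univ, Fintype.card_fun, Fintype.card_coe,
          Fintype.card_coe, nsmul_eq_mul]
        push_cast
        ring

lemma le_ZFA {M : ℝ} {a₀ : ℕ} (ha₀ : a₀ ∈ A)
    (hM : ∀ x : G → ℕ, (∀ g, x g ∈ A) → |φ x| ≤ M) (F : Finset G) :
    (A.card : ℝ) ^ F.card * Real.exp (-(M * F.card)) ≤ ZFA φ A F := by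
  calc (A.card : ℝ) ^ F.card * Real.exp (-(M * F.card))
      = ∑ _w : ↥F → ↥A, Real.exp (-(M * F.card)) := by
        rw [Finset.sum_const, Finset.card_univ, Fintype.card_fun, Fintype.card_coe,
          Fintype.card_coe, nsmul_eq_mul]
        push_cast
        ring
    _ ≤ ZFA φ A F :=
        Finset.sum_le_sum fun w _ =>
          Real.exp_le_exp.mpr (le_cylSupA ha₀ hM F _ (fun i => (w i).2))

lemma abs_log_ZFA_le {M : ℝ} (hM0 : 0 ≤ M) {a₀ : ℕ} (ha₀ : a₀ ∈ A)
    (hM : ∀ x : G → ℕ, (∀ g, x g ∈ A) → |φ x| ≤ M) (F : Finset G) :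
    |Real.log (ZFA φ A F)| ≤ (Real.log A.card + M) * F.card := by
  have hA : A.Nonempty := ⟨a₀, ha₀⟩
  have hApos : (0 : ℝ) < A.card := by exact_mod_cast hA.card_pos
  have hlogA : 0 ≤ Real.log A.card :=
    Real.log_nonneg (by exact_mod_cast hA.card_pos)
  have hpow : (0 : ℝ) < (A.card : ℝ) ^ F.card := by positivity
  rw [abs_le]
  constructor
  · have h1 : (A.card : ℝ) ^ F.card * Real.exp (-(M * F.card)) ≤ ZFA φ A F :=
      le_ZFA ha₀ hM F
    have h2 := Real.log_le_log (by positivity) h1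
    rw [Real.log_mul (ne_of_gt hpow) (ne_of_gt (Real.exp_pos _)), Real.log_exp,
      Real.log_pow] at h2
    have h3 : -((Real.log A.card + M) * F.card) ≤
        (F.card : ℝ) * Real.log A.card + -(M * F.card) := by
      have : (0:ℝ) ≤ (F.card : ℝ) * Real.log A.card := by positivity
      nlinarith
    linarith
  · have h1 : ZFA φ A F ≤ (A.card : ℝ) ^ F.card * Real.exp (M * F.card) :=
      ZFA_le hM0 hM F
    have h2 := Real.log_le_log (ZFA_pos hA F) h1
    rw [Real.log_mul (ne_of_gt hpow) (ne_of_gt (Real.exp_pos _)), Real.log_exp,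
      Real.log_pow] at h2
    nlinarith [h2]

/-- `ZFA` is invariant under right translation. -/
lemma ZFA_translate (c : G) (E : Finset G) :
    ZFA φ A (E.image (· * c)) = ZFA φ A E := by
  classical
  set Ec := E.image (· * c) with hEc
  have hmul : Function.Injective (· * c) := mul_left_injective c
  -- the translation equivalence
  have hms : ∀ e : ↥E, (e : G) * c ∈ Ec := fun e => Finset.mem_image_of_mem _ e.2
  have hms' : ∀ i : ↥Ec, (i : G) * c⁻¹ ∈ E := by
    rintro ⟨i, hi⟩
    obtain ⟨e, he, hec⟩ := Finset.mem_image.mp hi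
    simpa [← hec] using he
  set τ : ↥E ≃ ↥Ec :=
    { toFun := fun e => ⟨e * c, hms e⟩
      invFun := fun i => ⟨(i : G) * c⁻¹, hms' i⟩
      left_inv := fun e => Subtype.ext (mul_inv_cancel_right _ _)
      right_inv := fun i => Subtype.ext (inv_mul_cancel_right _ _) } with hτ
  -- matching of suprema
  have hkey : ∀ w : ↥Ec → ℕ,
      cylSupA φ A Ec w = cylSupA φ A E (fun e => w (τ e)) := by
    intro w
    unfold cylSupA
    congr 1
    ext r
    constructor
    · rintro ⟨x, hxA, hxw, rfl⟩
      refine ⟨fun h => x (h * c), fun h => hxA _, ?_, ?_⟩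
      · intro e
        have := hxw (τ e)
        simpa [hτ] using this
      · rw [phiSum, phiSum, hEc, Finset.sum_image (fun a _ b _ h => hmul h)]
        refine Finset.sum_congr rfl fun e he => ?_
        congr 1
        funext h
        simp [shift, mul_assoc]
    · rintro ⟨y, hyA, hyw, rfl⟩
      refine ⟨fun h => y (h * c⁻¹), fun h => hyA _, ?_, ?_⟩
      · rintro i
        have h1 : y ↑(τ.symm i) = w (τ (τ.symm i)) := hyw (τ.symm i)
        have h2 : ((τ.symm i : ↥E) : G) = (i : G) * c⁻¹ := by simp [hτ]
        have h3 : τ (τ.symm i) = i := τ.apply_symm_apply i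
        calc (fun h => y (h * c⁻¹)) ↑i = y (↑i * c⁻¹) := rfl
          _ = y ↑(τ.symm i) := by rw [h2]
          _ = w (τ (τ.symm i)) := h1
          _ = w i := by rw [h3]
      · rw [phiSum, phiSum, hEc, Finset.sum_image (fun a _ b _ h => hmul h)]
        refine Finset.sum_congr rfl fun e he => ?_
        congr 1
        funext h
        simp [shift, mul_assoc]
    -- end hkey
  unfold ZFA
  refine (Fintype.sum_equiv (Equiv.arrowCongr τ (Equiv.refl ↥A)) _ _ ?_).symm
  intro v
  congr 1
  rw [hkey]
  congr 1
  funext e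
  simp [Equiv.arrowCongr]

end PressureAux2

section PressureAux3

open Finset MeasureTheory Function
open scoped ENNReal Pointwise

variable {G : Type*} [Group G] [DecidableEq G]
variable {φ : (G → ℕ) → ℝ} {A : Finset ℕ}

lemma cylSupA_cover {κ : Type*} {M : ℝ} {a₀ : ℕ} (ha₀ : a₀ ∈ A)
    (hM : ∀ x : G → ℕ, (∀ g, x g ∈ A) → |φ x| ≤ M)
    (I : Finset κ) (S : κ → Finset G) (F : Finset G) (k : ℕ) (hk : 0 < k)
    (hS : ∀ c ∈ I, S c ⊆ F) (hcov : ∀ i ∈ F, (I.filter fun c => i ∈ S c).card = k)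
    (y : G → ℕ) (hy : ∀ g ∈ F, y g ∈ A) :
    cylSupA φ A F (fun i : ↥F => y ↑i) ≤
      (k : ℝ)⁻¹ * ∑ c ∈ I, cylSupA φ A (S c) (fun i : ↥(S c) => y ↑i) := by
  classical
  have hkR : (0:ℝ) < k := by exact_mod_cast hk
  set x₁ : G → ℕ := fun g => if h : g ∈ F then y g else a₀ with hx₁
  have hx₁A : ∀ g, x₁ g ∈ A := by
    intro g; rw [hx₁]; by_cases h : g ∈ F
    · simpa [h] using hy g h
    · simpa [h] using ha₀
  have hx₁w : ∀ i : ↥F, x₁ ↑i = y ↑i := fun i => by rw [hx₁]; simp [i.2]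
  refine csSup_le ⟨phiSum φ F x₁, x₁, hx₁A, hx₁w, rfl⟩ ?_
  rintro r ⟨x, hxA, hxw, rfl⟩
  have hfilter : ∀ c ∈ I, S c = F.filter (fun g => g ∈ S c) := by
    intro c hc; ext g
    simp only [Finset.mem_filter]
    exact ⟨fun h => ⟨hS c hc h, h⟩, fun h => h.2⟩
  have hkey : ∑ c ∈ I, phiSum φ (S c) x = (k:ℝ) * phiSum φ F x := by
    calc ∑ c ∈ I, phiSum φ (S c) x
        = ∑ c ∈ I, ∑ g ∈ F, (if g ∈ S c then φ (shift g x) else 0) := by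
          refine Finset.sum_congr rfl fun c hc => ?_
          simp only [phiSum]
          conv_lhs => rw [hfilter c hc]
          rw [Finset.sum_filter]
      _ = ∑ g ∈ F, ∑ c ∈ I, (if g ∈ S c then φ (shift g x) else 0) := Finset.sum_comm
      _ = ∑ g ∈ F, (k:ℝ) * φ (shift g x) := by
          refine Finset.sum_congr rfl fun g hg => ?_
          rw [← Finset.sum_filter, Finset.sum_const, hcov g hg, nsmul_eq_mul]
      _ = (k:ℝ) * phiSum φ F x := by
          simp only [phiSum]
          rw [← Finset.mul_sum]
  have hterm : ∀ c ∈ I, phiSum φ (S c) x ≤ cylSupA φ A (S c) (fun i : ↥(S c) => y ↑i) := by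
    intro c hc
    refine le_csSup (bddAbove_cylSupA_set hM (S c) _) ⟨x, hxA, ?_, rfl⟩
    intro i
    exact hxw ⟨↑i, hS c hc i.2⟩
  have h3 : (k:ℝ) * phiSum φ F x ≤
      ∑ c ∈ I, cylSupA φ A (S c) (fun i : ↥(S c) => y ↑i) := by
    rw [← hkey]
    exact Finset.sum_le_sum hterm
  rw [inv_mul_eq_div]
  refine (le_div_iff₀ hkR).mpr ?_
  calc phiSum φ F x * k = (k:ℝ) * phiSum φ F x := mul_comm _ _
    _ ≤ _ := h3

lemma ZFA_shearer {κ : Type*} {M : ℝ} {a₀ : ℕ} (hM0 : 0 ≤ M) (ha₀ : a₀ ∈ A)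
    (hM : ∀ x : G → ℕ, (∀ g, x g ∈ A) → |φ x| ≤ M)
    (I : Finset κ) (S : κ → Finset G) (F : Finset G) (k : ℕ) (hk : 0 < k)
    (hS : ∀ c ∈ I, S c ⊆ F) (hcov : ∀ i ∈ F, (I.filter fun c => i ∈ S c).card = k) :
    Real.log (ZFA φ A F) ≤ (k : ℝ)⁻¹ * ∑ c ∈ I, Real.log (ZFA φ A (S c)) := by
  classical
  have hA : A.Nonempty := ⟨a₀, ha₀⟩
  have hp0 : (0:ℝ) ≤ (k:ℝ)⁻¹ := by positivity
  set f : κ → (G → ℕ) → ℝ≥0∞ :=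
    fun c y => ENNReal.ofReal (Real.exp (cylSupA φ A (S c) (fun i : ↥(S c) => y ↑i)))
    with hfdef
  have hagree : ∀ (T : Finset G) (y z : G → ℕ), (∀ g ∈ T, y g = z g) →
      (fun i : ↥T => y ↑i) = (fun i : ↥T => z ↑i) :=
    fun T y z h => funext fun i => h ↑i i.2
  have hmf : ∀ c ∈ I, Measurable (f c) := by
    intro c _
    refine measurable_of_agree (S c) _ (fun y z h => ?_)
    rw [hfdef]
    simp only
    rw [hagree (S c) y z h]
  have hdep : ∀ c ∈ I, ∀ i, i ∉ S c → ∀ y a, f c (Function.update y i a) = f c y := by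
    intro c _ i hi y a
    rw [hfdef]
    simp only
    rw [hagree (S c) (Function.update y i a) y
      (fun g hg => Function.update_of_ne (fun h => hi (by rw [← h]; exact hg)) _ _)]
  have hmprod : Measurable (fun y => ∏ c ∈ I, f c y ^ (k:ℝ)⁻¹) := by
    refine measurable_of_agree F _ (fun y z h => ?_)
    refine Finset.prod_congr rfl fun c hc => ?_
    rw [hfdef]
    simp only
    rw [hagree (S c) y z (fun g hg => h g (hS c hc hg))]
  set x₀ : G → ℕ := fun _ => a₀ with hx₀
  have hovrA : ∀ (w : ↥F → ↥A) (g : G), g ∈ F → (ovr A x₀ F w) g ∈ A := by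
    intro w g hg
    simp only [ovr, dif_pos hg]
    exact (w ⟨g, hg⟩).2
  have hpt : ∀ w : ↥F → ↥A,
      ENNReal.ofReal (Real.exp (cylSupA φ A F (fun i : ↥F => (ovr A x₀ F w) ↑i))) ≤
        ∏ c ∈ I, f c (ovr A x₀ F w) ^ (k:ℝ)⁻¹ := by
    intro w
    have hcover := cylSupA_cover ha₀ hM I S F k hk hS hcov (ovr A x₀ F w) (hovrA w)
    calc ENNReal.ofReal (Real.exp (cylSupA φ A F (fun i : ↥F => (ovr A x₀ F w) ↑i)))
        ≤ ENNReal.ofReal (Real.exp ((k:ℝ)⁻¹ *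
            ∑ c ∈ I, cylSupA φ A (S c) (fun i : ↥(S c) => (ovr A x₀ F w) ↑i))) :=
          ENNReal.ofReal_le_ofReal (Real.exp_le_exp.mpr hcover)
      _ = ENNReal.ofReal (∏ c ∈ I, Real.exp
            ((cylSupA φ A (S c) (fun i : ↥(S c) => (ovr A x₀ F w) ↑i)) * (k:ℝ)⁻¹)) := by
          rw [← Real.exp_sum]
          congr 1
          rw [← Finset.sum_mul, mul_comm]
      _ = ∏ c ∈ I, ENNReal.ofReal (Real.exp
            ((cylSupA φ A (S c) (fun i : ↥(S c) => (ovr A x₀ F w) ↑i)) * (k:ℝ)⁻¹)) :=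
          ofReal_prod_of_nonneg _ _ (fun c _ => (Real.exp_pos _).le)
      _ = ∏ c ∈ I, f c (ovr A x₀ F w) ^ (k:ℝ)⁻¹ := by
          refine Finset.prod_congr rfl fun c _ => ?_
          rw [hfdef]
          simp only
          rw [ENNReal.ofReal_rpow_of_pos (Real.exp_pos _)]
          congr 1
          rw [Real.rpow_def_of_pos (Real.exp_pos _), Real.log_exp]
  have hchain : ENNReal.ofReal (ZFA φ A F) ≤
      ∏ c ∈ I, (ENNReal.ofReal (ZFA φ A (S c))) ^ (k:ℝ)⁻¹ := by
    calc ENNReal.ofReal (ZFA φ A F)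
        = ∑ w : ↥F → ↥A, ENNReal.ofReal
            (Real.exp (cylSupA φ A F (fun i : ↥F => ((w i : ℕ))))) := by
          rw [ZFA, ENNReal.ofReal_sum_of_nonneg (fun w _ => (Real.exp_pos _).le)]
      _ = ∑ w : ↥F → ↥A, ENNReal.ofReal
            (Real.exp (cylSupA φ A F (fun i : ↥F => (ovr A x₀ F w) ↑i))) := by
          refine Finset.sum_congr rfl fun w _ => ?_
          have hw : (fun i : ↥F => (ovr A x₀ F w) ↑i) = (fun i : ↥F => ((w i : ℕ))) := by
            funext i
            simp [ovr, i.2]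
          rw [hw]
      _ ≤ ∑ w : ↥F → ↥A, (fun y => ∏ c ∈ I, f c y ^ (k:ℝ)⁻¹) (ovr A x₀ F w) :=
          Finset.sum_le_sum (fun w _ => hpt w)
      _ = (∫⋯∫⁻_F, (fun y => ∏ c ∈ I, f c y ^ (k:ℝ)⁻¹) ∂(fun _ : G => muA A)) x₀ :=
          (lmarginal_eq_sum A F _ hmprod x₀).symm
      _ ≤ ∏ c ∈ I, ((∫⋯∫⁻_(S c), f c ∂(fun _ : G => muA A)) x₀) ^ (k:ℝ)⁻¹ :=
          finner_marginal A I k hk F S f hS hcov hmf hdep x₀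
      _ = ∏ c ∈ I, (ENNReal.ofReal (ZFA φ A (S c))) ^ (k:ℝ)⁻¹ := by
          refine Finset.prod_congr rfl fun c hc => ?_
          congr 1
          rw [lmarginal_eq_sum A (S c) (f c) (hmf c hc) x₀,
            ZFA, ENNReal.ofReal_sum_of_nonneg (fun v _ => (Real.exp_pos _).le)]
          refine Finset.sum_congr rfl fun v _ => ?_
          rw [hfdef]
          simp only
          have hv : (fun i : ↥(S c) => (ovr A x₀ (S c) v) ↑i)
              = (fun i : ↥(S c) => ((v i : ℕ))) := by
            funext i
            simp [ovr, i.2]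
          rw [hv]
  have hfin : (∏ c ∈ I, (ENNReal.ofReal (ZFA φ A (S c))) ^ (k:ℝ)⁻¹) ≠ ⊤ := by
    refine (ENNReal.prod_lt_top (fun c _ => ?_)).ne
    exact (ENNReal.rpow_ne_top_of_nonneg hp0 ENNReal.ofReal_ne_top).lt_top
  have hreal : ZFA φ A F ≤ ∏ c ∈ I, (ZFA φ A (S c)) ^ ((k:ℝ)⁻¹) := by
    have h1 := ENNReal.toReal_mono hfin hchain
    rw [ENNReal.toReal_ofReal (ZFA_pos hA F).le, ENNReal.toReal_prod] at h1
    refine h1.trans_eq (Finset.prod_congr rfl fun c _ => ?_)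
    rw [← ENNReal.toReal_rpow, ENNReal.toReal_ofReal (ZFA_pos hA (S c)).le]
  have hlog := Real.log_le_log (ZFA_pos hA F) hreal
  rw [Real.log_prod
    (fun c _ => (Real.rpow_pos_of_pos (ZFA_pos hA (S c)) _).ne')] at hlog
  calc Real.log (ZFA φ A F)
      ≤ ∑ c ∈ I, Real.log ((ZFA φ A (S c)) ^ ((k:ℝ)⁻¹)) := hlog
    _ = ∑ c ∈ I, (k:ℝ)⁻¹ * Real.log (ZFA φ A (S c)) :=
        Finset.sum_congr rfl fun c _ => Real.log_rpow (ZFA_pos hA (S c)) _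
    _ = (k:ℝ)⁻¹ * ∑ c ∈ I, Real.log (ZFA φ A (S c)) := by rw [Finset.mul_sum]

end PressureAux3

set_option maxHeartbeats 1600000 in
/-- for a continuous potential and a finite alphabet `A`, the pressure
`p(A,φ)` exists as a limit over sets becoming more and more invariant and satisfies
the infimum rule. -/
theorem pressure_finite_alphabet_exists_and_infimum_rule [Countable G]
    (φ : (G → ℕ) → ℝ) (hφ : Continuous φ) (hG : Amen (G := G))
    (A : Finset ℕ) (hA : A.Nonempty) :
    ∀ ε : ℝ, 0 < ε → ∃ (K : Finset G) (δ : ℝ), 0 < δ ∧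
      ∀ F : Finset G, F.Nonempty → FInv K δ F →
        |Real.log (ZFA φ A F) / F.card -
          sInf {r | ∃ B : Finset G, B.Nonempty ∧ r = Real.log (ZFA φ A B) / B.card}| < ε := by
  classical
  intro ε hε
  obtain ⟨M, hM0, hM⟩ := exists_potential_bound hφ A
  obtain ⟨a₀, ha₀⟩ := hA
  have hA : A.Nonempty := ⟨a₀, ha₀⟩
  set L : ℝ := Real.log A.card + M with hLdef
  have hlogA : 0 ≤ Real.log A.card := Real.log_nonneg (by exact_mod_cast hA.card_pos)
  have hL0 : 0 ≤ L := add_nonneg hlogA hM0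
  set sP : Set ℝ := {r | ∃ B : Finset G, B.Nonempty ∧ r = Real.log (ZFA φ A B) / B.card}
    with hsP
  have hlb : ∀ r ∈ sP, Real.log A.card - M ≤ r := by
    rintro r ⟨B, hB, rfl⟩
    have hBpos : (0:ℝ) < B.card := by exact_mod_cast hB.card_pos
    rw [le_div_iff₀ hBpos]
    have hpow : (0:ℝ) < (A.card : ℝ) ^ B.card := by
      have : (0:ℝ) < (A.card : ℝ) := by exact_mod_cast hA.card_pos
      positivity
    have h1 := le_ZFA (φ := φ) ha₀ hM B
    have h2 := Real.log_le_log (by positivity) h1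
    rw [Real.log_mul (ne_of_gt hpow) (ne_of_gt (Real.exp_pos _)), Real.log_exp,
      Real.log_pow] at h2
    nlinarith [h2]
  have hbdd : BddBelow sP := ⟨Real.log A.card - M, hlb⟩
  have hne : sP.Nonempty :=
    ⟨Real.log (ZFA φ A {1}) / (({1} : Finset G).card : ℝ),
      ⟨{1}, Finset.singleton_nonempty 1, rfl⟩⟩
  obtain ⟨r₀, hr₀mem, hr₀⟩ :=
    exists_lt_of_csInf_lt hne (lt_add_of_pos_right (sInf sP) (half_pos hε))
  obtain ⟨E, hE, rfl⟩ := hr₀mem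
  obtain ⟨e₀, he₀⟩ := hE
  have hE : E.Nonempty := ⟨e₀, he₀⟩
  have hkpos : 0 < E.card := hE.card_pos
  have hkR : (0:ℝ) < E.card := by exact_mod_cast hkpos
  set δ : ℝ := ε / (4 * (E.card : ℝ) * (L + 1)) with hδdef
  have hδpos : 0 < δ := by positivity
  refine ⟨E * E⁻¹, δ, hδpos, ?_⟩
  intro F hF hFinv
  have hFpos : (0:ℝ) < F.card := by exact_mod_cast hF.card_pos
  set I : Finset G := E⁻¹ * F with hIdef
  set S : G → Finset G := fun c => (E.image (· * c)) ∩ F with hSdef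
  have hS : ∀ c ∈ I, S c ⊆ F := fun c _ => Finset.inter_subset_right
  have hcov : ∀ i ∈ F, (I.filter fun c => i ∈ S c).card = E.card := by
    intro i hi
    have hset : I.filter (fun c => i ∈ S c) = E.image (fun e => e⁻¹ * i) := by
      ext c
      simp only [Finset.mem_filter, Finset.mem_image]
      constructor
      · rintro ⟨hcI, hcS⟩
        rw [hSdef] at hcS
        simp only at hcS
        obtain ⟨e, he, hec⟩ := Finset.mem_image.mp (Finset.mem_inter.mp hcS).1
        exact ⟨e, he, by rw [← hec, inv_mul_cancel_left]⟩
      · rintro ⟨e, he, rfl⟩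
        refine ⟨Finset.mul_mem_mul (Finset.inv_mem_inv he) hi, ?_⟩
        rw [hSdef]
        simp only
        refine Finset.mem_inter.mpr ⟨Finset.mem_image.mpr ⟨e, he, ?_⟩, hi⟩
        rw [mul_inv_cancel_left]
    rw [hset, Finset.card_image_of_injective _ (fun a b hab => by
      have h1 : a⁻¹ = b⁻¹ := mul_right_cancel hab
      exact inv_injective h1)]
  have hsh := ZFA_shearer hM0 ha₀ hM I S F E.card hkpos hS hcov
  set zE : ℝ := Real.log (ZFA φ A E) with hzE
  set zF : ℝ := Real.log (ZFA φ A F) with hzF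
  have habsE : |zE| ≤ L * E.card := by
    have := abs_log_ZFA_le hM0 ha₀ hM E
    rw [← hLdef] at this
    exact this
  set Cg : Finset G := I.filter (fun c => (E.image (· * c)) ⊆ F) with hCg
  set Bb : Finset G := I.filter (fun c => ¬ (E.image (· * c)) ⊆ F) with hBb
  have hsplit : ∑ c ∈ I, Real.log (ZFA φ A (S c)) =
      (∑ c ∈ Cg, Real.log (ZFA φ A (S c))) + ∑ c ∈ Bb, Real.log (ZFA φ A (S c)) :=
    (Finset.sum_filter_add_sum_filter_not I _ _).symm
  have hgood : ∑ c ∈ Cg, Real.log (ZFA φ A (S c)) = Cg.card * zE := by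
    rw [Finset.sum_congr rfl (fun c hc => ?_), Finset.sum_const, nsmul_eq_mul]
    rw [hCg] at hc
    have hsub := (Finset.mem_filter.mp hc).2
    rw [hSdef]
    simp only
    rw [Finset.inter_eq_left.mpr hsub, ZFA_translate, hzE]
  have hbad : ∑ c ∈ Bb, Real.log (ZFA φ A (S c)) ≤ Bb.card * (E.card * L) := by
    calc ∑ c ∈ Bb, Real.log (ZFA φ A (S c)) ≤ ∑ _c ∈ Bb, (E.card : ℝ) * L := by
          refine Finset.sum_le_sum fun c _ => ?_
          have h1 := (abs_le.mp (abs_log_ZFA_le hM0 ha₀ hM (S c))).2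
          rw [← hLdef] at h1
          have h2 : ((S c).card : ℝ) ≤ E.card := by
            exact_mod_cast (Finset.card_le_card (Finset.inter_subset_left)).trans
              Finset.card_image_le
          nlinarith
      _ = Bb.card * ((E.card : ℝ) * L) := by rw [Finset.sum_const, nsmul_eq_mul]
  have hCle : (Cg.card : ℝ) ≤ F.card := by
    have h : Cg.card ≤ F.card := by
      refine Finset.card_le_card_of_injOn (fun c => e₀ * c) (fun c hc => ?_)
        ((mul_right_injective e₀).injOn)
      rw [hCg] at hc
      exact (Finset.mem_filter.mp hc).2 (Finset.mem_image_of_mem _ he₀)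
    exact_mod_cast h
  have hIF : F.card ≤ I.card := by
    calc F.card = (F.image (fun f => e₀⁻¹ * f)).card :=
          (Finset.card_image_of_injective _ (mul_right_injective e₀⁻¹)).symm
      _ ≤ I.card := by
          refine Finset.card_le_card (fun y hy => ?_)
          obtain ⟨f, hf, rfl⟩ := Finset.mem_image.mp hy
          exact Finset.mul_mem_mul (Finset.inv_mem_inv he₀) hf
  have hcards : Cg.card + Bb.card = I.card :=
    Finset.card_filter_add_card_filter_not _
  have hCge : (F.card : ℝ) - Bb.card ≤ Cg.card := by
    have h : F.card ≤ Cg.card + Bb.card := by rw [hcards]; exact hIF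
    have h' : (F.card : ℝ) ≤ (Cg.card : ℝ) + Bb.card := by exact_mod_cast h
    linarith
  have hBbound : (Bb.card : ℝ) ≤ E.card * ((((E * E⁻¹) * F) \ F).card : ℝ) := by
    have hsub : Bb ⊆ E.biUnion (fun e => (((E * E⁻¹) * F) \ F).image (fun y => e⁻¹ * y)) := by
      intro c hc
      rw [hBb] at hc
      obtain ⟨hcI, hnot⟩ := Finset.mem_filter.mp hc
      obtain ⟨y, hy, hyF⟩ := Finset.not_subset.mp hnot
      obtain ⟨e', he', rfl⟩ := Finset.mem_image.mp hy
      rw [hIdef] at hcI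
      obtain ⟨u, hu, f, hf, huf⟩ := Finset.mem_mul.mp hcI
      obtain ⟨e, he, rfl⟩ := Finset.mem_inv.mp hu
      have hyKF : e' * c ∈ (E * E⁻¹) * F := by
        rw [← huf, ← mul_assoc]
        exact Finset.mul_mem_mul (Finset.mul_mem_mul he' (Finset.inv_mem_inv he)) hf
      refine Finset.mem_biUnion.mpr ⟨e', he',
        Finset.mem_image.mpr ⟨e' * c, Finset.mem_sdiff.mpr ⟨hyKF, hyF⟩, ?_⟩⟩
      rw [inv_mul_cancel_left]
    have hN : Bb.card ≤ E.card * ((((E * E⁻¹) * F) \ F).card) := by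
      calc Bb.card ≤ (E.biUnion (fun e => (((E * E⁻¹) * F) \ F).image (fun y => e⁻¹ * y))).card :=
            Finset.card_le_card hsub
        _ ≤ ∑ e ∈ E, ((((E * E⁻¹) * F) \ F).image (fun y => e⁻¹ * y)).card :=
            Finset.card_biUnion_le
        _ ≤ ∑ _e ∈ E, (((E * E⁻¹) * F) \ F).card :=
            Finset.sum_le_sum fun e _ => Finset.card_image_le
        _ = E.card * ((((E * E⁻¹) * F) \ F).card) := by
            rw [Finset.sum_const, smul_eq_mul]
    exact_mod_cast hN
  have hsd : (((((E * E⁻¹) * F) \ F).card : ℝ)) < δ * F.card := by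
    refine lt_of_le_of_lt ?_ hFinv
    have h : (((E * E⁻¹) * F) \ F).card ≤ (((E * E⁻¹) * F) ∆ F).card := by
      refine Finset.card_le_card (fun y hy => ?_)
      rw [symmDiff_def]
      exact Finset.mem_union_left _ hy
    exact_mod_cast h
  have hBδ : (Bb.card : ℝ) < E.card * (δ * F.card) :=
    lt_of_le_of_lt hBbound (mul_lt_mul_of_pos_left hsd hkR)
  have hsum : ∑ c ∈ I, Real.log (ZFA φ A (S c)) ≤
      F.card * zE + 2 * Bb.card * (E.card * L) := by
    rw [hsplit, hgood]
    have hCC : (Cg.card:ℝ) * zE ≤ F.card * zE + Bb.card * (E.card * L) := by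
      have hBn : (0:ℝ) ≤ (Bb.card : ℝ) := Nat.cast_nonneg _
      rcases le_or_gt 0 zE with hz | hz
      · have h1 : (Cg.card:ℝ) * zE ≤ F.card * zE := mul_le_mul_of_nonneg_right hCle hz
        have h2 : (0:ℝ) ≤ (Bb.card:ℝ) * ((E.card:ℝ) * L) :=
          mul_nonneg hBn (mul_nonneg hkR.le hL0)
        linarith
      · have h1 : (Cg.card:ℝ) * zE ≤ ((F.card:ℝ) - Bb.card) * zE :=
          mul_le_mul_of_nonpos_right hCge hz.le
        rw [sub_mul] at h1
        have h2 : -(L * E.card) ≤ zE := (abs_le.mp habsE).1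
        have h3 : (Bb.card:ℝ) * (-zE) ≤ (Bb.card:ℝ) * (L * E.card) :=
          mul_le_mul_of_nonneg_left (by linarith) hBn
        nlinarith [h1, h3]
    linarith [hbad, hCC]
  have hmain : zF / F.card ≤ zE / E.card + 2 * L * ((Bb.card : ℝ) / F.card) := by
    have h1 : zF ≤ (E.card:ℝ)⁻¹ * (F.card * zE + 2 * Bb.card * (E.card * L)) :=
      le_trans hsh (mul_le_mul_of_nonneg_left hsum (by positivity))
    have h2 : (E.card:ℝ)⁻¹ * (F.card * zE + 2 * Bb.card * (E.card * L)) =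
        F.card * (zE / E.card) + 2 * L * Bb.card := by
      field_simp
    rw [h2] at h1
    have h3 : zF / F.card ≤ (F.card * (zE / E.card) + 2 * L * Bb.card) / F.card :=
      (div_le_div_iff_of_pos_right hFpos).mpr h1
    have h4 : (F.card * (zE / E.card) + 2 * L * Bb.card) / F.card =
        zE / E.card + 2 * L * ((Bb.card : ℝ) / F.card) := by
      field_simp
    rw [h4] at h3
    exact h3
  have hδterm : 2 * L * ((Bb.card:ℝ) / F.card) ≤ ε / 2 := by
    have hb2 : (Bb.card:ℝ) / F.card ≤ (E.card : ℝ) * δ := by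
      rw [div_le_iff₀ hFpos]
      calc (Bb.card:ℝ) ≤ E.card * (δ * F.card) := hBδ.le
        _ = E.card * δ * F.card := by ring
    have h5 : 2 * L * ((Bb.card:ℝ)/F.card) ≤ 2 * L * ((E.card : ℝ) * δ) :=
      mul_le_mul_of_nonneg_left hb2 (by positivity)
    have h6 : 2 * L * ((E.card : ℝ) * δ) ≤ ε / 2 := by
      rw [hδdef]
      have hL1 : (0:ℝ) < L + 1 := by linarith
      have heq : 2 * L * ((E.card : ℝ) * (ε / (4 * (E.card : ℝ) * (L + 1)))) =
          L * ε / (2 * (L + 1)) := by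
        field_simp
        ring
      rw [heq, div_le_div_iff₀ (by positivity) (by norm_num : (0:ℝ) < 2)]
      nlinarith
    linarith
  have hup : zF / F.card < sInf sP + ε := by
    have hr : zE / E.card < sInf sP + ε / 2 := hr₀
    linarith
  have hlow : sInf sP ≤ zF / F.card := csInf_le hbdd ⟨F, hF, rfl⟩
  rw [abs_lt]
  constructor
  · linarith
  · linarith
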